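/- arXiv:1108.4386 — 5 statements merged into one kernel-verified Lean document; each statement's English description precedes it below -/
import Mathlib

section
/- Additive Drift Theorem for stopping sums: Let X_1, X_2, … be random variables with bounded support and let T = min{t : X_1 + … + X_t ≥ g} for a given g > 0. If E(T) exists and E(X_i | T ≥ i) ≤ u for all i ∈ ℕ, then E(T) ≥ g/u. -/
open MeasureTheory
open scoped BigOperators ENNReal NNReal

/-- Additive drift theorem for stopping sums: if `T` is the first time the partial
sums `X 1 + ⋯ + X t` reach `g > 0`, the variables have bounded support,
`E T` exists, and `E(X i ∣ T ≥ i) ≤ u`, then `E T ≥ g / u`. -/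
theorem additive_drift_stopping_sums
    {Ω : Type*} [MeasurableSpace Ω] (μ : Measure Ω) [IsProbabilityMeasure μ]
    (X : ℕ → Ω → ℝ) (hmeas : ∀ i, Measurable (X i))
    (C : ℝ) (hbdd : ∀ i ω, |X i ω| ≤ C)
    (g u : ℝ) (hg : 0 < g) (hu : 0 < u)
    (T : Ω → ℕ)
    (hT : ∀ ω, g ≤ ∑ i ∈ Finset.Icc 1 (T ω), X i ω ∧
      ∀ t < T ω, ∑ i ∈ Finset.Icc 1 t, X i ω < g)
    (hTint : Integrable (fun ω => (T ω : ℝ)) μ)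
    (hcond : ∀ i : ℕ, 1 ≤ i →
      (∫ ω in {ω | i ≤ T ω}, X i ω ∂μ) ≤ u * (μ {ω | i ≤ T ω}).toReal) :
    g / u ≤ ∫ ω, (T ω : ℝ) ∂μ := by
  classical
  -- Ω is nonempty, hence C ≥ 0
  have hΩ : Nonempty Ω := by
    by_contra h
    rw [not_nonempty_iff] at h
    have h1 : μ Set.univ = 1 := measure_univ
    rw [Set.univ_eq_empty_iff.mpr h] at h1
    simp at h1
  obtain ⟨ω₀⟩ := hΩ
  have hC : 0 ≤ C := (abs_nonneg _).trans (hbdd 0 ω₀)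
  -- measurable modification of T
  obtain ⟨hTm, hTfin⟩ := hTint
  set T' : Ω → ℕ := fun ω => ⌊hTm.mk _ ω⌋₊ with hT'def
  have hT'meas : Measurable T' := hTm.stronglyMeasurable_mk.measurable.nat_floor
  have hTT' : ∀ᵐ ω ∂μ, T ω = T' ω := hTm.ae_eq_mk.mono fun ω h => by
    simp only [hT'def, ← h, Nat.floor_natCast]
  -- the sets {T' ≥ i}
  set A : ℕ → Set Ω := fun i => {ω | i ≤ T' ω} with hAdef
  have hAmeas : ∀ i, MeasurableSet (A i) := fun i => hT'meas measurableSet_Ici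
  set A' : ℕ → Set Ω := fun i => if i = 0 then ∅ else A i with hA'def
  have hA'meas : ∀ i, MeasurableSet (A' i) := fun i => by
    by_cases h : i = 0 <;> simp [hA'def, h, hAmeas i]
  -- the summands
  set f : ℕ → Ω → ℝ := fun i => (A' i).indicator (X i) with hfdef
  have hfmeas : ∀ i, Measurable (f i) := fun i => (hmeas i).indicator (hA'meas i)
  -- pointwise sum
  have hnotmem : ∀ ω i, i ∉ Finset.Icc 1 (T' ω) → ω ∉ A' i := by
    intro ω i hi hmem
    simp only [Finset.mem_Icc, not_and_or, not_le] at hi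
    by_cases h0 : i = 0
    · simp [hA'def, h0] at hmem
    · simp only [hA'def, h0, if_false, hAdef, Set.mem_setOf_eq] at hmem
      rcases hi with h | h
      · omega
      · omega
  have hfsum : ∀ ω, ∑' i, f i ω = ∑ i ∈ Finset.Icc 1 (T' ω), X i ω := by
    intro ω
    rw [tsum_eq_sum (s := Finset.Icc 1 (T' ω))
      (fun i hi => Set.indicator_of_notMem (hnotmem ω i hi) _)]
    refine Finset.sum_congr rfl fun i hi => ?_
    simp only [Finset.mem_Icc] at hi
    have h0 : i ≠ 0 := by omega
    have hmem : ω ∈ A' i := by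
      simp [hA'def, h0, hAdef, hi.2]
    simp [hfdef, Set.indicator_of_mem hmem]
  -- the layer-cake identity : ∑ μ (A' i) = ∫⁻ T'
  have hA'sum : ∑' i : ℕ, μ (A' i) = ∫⁻ ω, (T' ω : ℝ≥0∞) ∂μ := by
    have h1 : ∀ i : ℕ, μ (A' i)
        = ∫⁻ ω, (A' i).indicator (fun _ => (1 : ℝ≥0∞)) ω ∂μ :=
      fun i => (lintegral_indicator_one (hA'meas i)).symm
    rw [tsum_congr h1, ← lintegral_tsum
      (fun i => ((measurable_const (a := (1:ℝ≥0∞))).indicator (hA'meas i)).aemeasurable)]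
    refine lintegral_congr fun ω => ?_
    rw [tsum_eq_sum (s := Finset.Icc 1 (T' ω))
      (fun i hi => Set.indicator_of_notMem (hnotmem ω i hi) _)]
    have hcard : (Finset.Icc 1 (T' ω)).card = T' ω := by
      rw [Nat.card_Icc]; omega
    rw [Finset.sum_congr rfl (fun i hi => ?_), Finset.sum_const, hcard, nsmul_eq_mul, mul_one]
    simp only [Finset.mem_Icc] at hi
    have h0 : i ≠ 0 := by omega
    have hmem : ω ∈ A' i := by simp [hA'def, h0, hAdef, hi.2]
    simp [Set.indicator_of_mem hmem]
  have hTlint : ∫⁻ ω, (T' ω : ℝ≥0∞) ∂μ ≠ ⊤ := by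
    have h1 : ∫⁻ ω, (T' ω : ℝ≥0∞) ∂μ = ∫⁻ ω, (‖(T ω : ℝ)‖₊ : ℝ≥0∞) ∂μ := by
      refine lintegral_congr_ae ?_
      filter_upwards [hTT'] with ω h
      rw [← h]
      simp
    rw [h1]
    exact hTfin.ne
  -- finiteness of the sum of lintegrals
  have hb : ∀ i, ∫⁻ ω, (‖f i ω‖₊ : ℝ≥0∞) ∂μ ≤ ENNReal.ofReal C * μ (A' i) := by
    intro i
    have hpt : ∀ ω, (‖f i ω‖₊ : ℝ≥0∞)
        ≤ (A' i).indicator (fun _ => ENNReal.ofReal C) ω := by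
      intro ω
      by_cases hω : ω ∈ A' i
      · rw [Set.indicator_of_mem hω]
        simp only [hfdef, Set.indicator_of_mem hω]
        rw [← enorm_eq_nnnorm, ← ofReal_norm]
        exact ENNReal.ofReal_le_ofReal (by simpa [Real.norm_eq_abs] using hbdd i ω)
      · simp [hfdef, Set.indicator_of_notMem hω]
    calc ∫⁻ ω, (‖f i ω‖₊ : ℝ≥0∞) ∂μ
        ≤ ∫⁻ ω, (A' i).indicator (fun _ => ENNReal.ofReal C) ω ∂μ := lintegral_mono hpt
      _ = ENNReal.ofReal C * μ (A' i) := lintegral_indicator_const (hA'meas i) _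
  have hfin : ∑' i, ∫⁻ ω, (‖f i ω‖₊ : ℝ≥0∞) ∂μ ≠ ⊤ := by
    refine ne_top_of_le_ne_top ?_ (Summable.tsum_le_tsum hb ENNReal.summable ENNReal.summable)
    rw [ENNReal.tsum_mul_left, hA'sum]
    exact ENNReal.mul_ne_top ENNReal.ofReal_ne_top hTlint
  -- measurability + integrability of the truncated sum
  have hSmeas : Measurable fun ω => ∑ i ∈ Finset.Icc 1 (T' ω), X i ω := by
    have h1 : Measurable fun p : Ω × ℕ => ∑ i ∈ Finset.Icc 1 p.2, X i p.1 :=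
      measurable_from_prod_countable_left fun n => by
        simpa using Finset.measurable_sum (Finset.Icc 1 n) (fun i _ => hmeas i)
    exact h1.comp (measurable_id.prodMk hT'meas)
  have hT'int : Integrable (fun ω => (T' ω : ℝ)) μ :=
    (Integrable.congr ⟨hTm, hTfin⟩ (hTT'.mono fun ω h => congrArg _ h))
  have hSint : Integrable (fun ω => ∑ i ∈ Finset.Icc 1 (T' ω), X i ω) μ := by
    refine Integrable.mono' (hT'int.const_mul C) hSmeas.aestronglyMeasurable
      (ae_of_all _ fun ω => ?_)
    rw [Real.norm_eq_abs]
    have hcard : (Finset.Icc 1 (T' ω)).card = T' ω := by rw [Nat.card_Icc]; omega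
    calc |∑ i ∈ Finset.Icc 1 (T' ω), X i ω|
        ≤ ∑ i ∈ Finset.Icc 1 (T' ω), |X i ω| := Finset.abs_sum_le_sum_abs _ _
      _ ≤ ∑ _i ∈ Finset.Icc 1 (T' ω), C := Finset.sum_le_sum fun i _ => hbdd i ω
      _ = C * (T' ω : ℝ) := by rw [Finset.sum_const, hcard, nsmul_eq_mul]; ring
  -- g ≤ ∫ truncated sum
  have hgS : g ≤ ∫ ω, ∑ i ∈ Finset.Icc 1 (T' ω), X i ω ∂μ := by
    have hge : ∀ᵐ ω ∂μ, g ≤ ∑ i ∈ Finset.Icc 1 (T' ω), X i ω := by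
      filter_upwards [hTT'] with ω h
      rw [← h]; exact (hT ω).1
    calc g = ∫ _, g ∂μ := by simp
      _ ≤ _ := integral_mono_ae (integrable_const g) hSint hge
  -- swap integral and sum
  have hswap : ∫ ω, ∑ i ∈ Finset.Icc 1 (T' ω), X i ω ∂μ = ∑' i, ∫ ω, f i ω ∂μ := by
    rw [← integral_tsum (fun i => (hfmeas i).aestronglyMeasurable) hfin]
    exact integral_congr_ae (ae_of_all _ fun ω => (hfsum ω).symm)
  -- bound each term
  have hAeq : ∀ i : ℕ, 1 ≤ i → ({ω | i ≤ T ω} : Set Ω) =ᵐ[μ] A i := by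
    intro i _
    rw [Filter.eventuallyEq_set]
    filter_upwards [hTT'] with ω h
    simp [hAdef, h]
  have hterm : ∀ i : ℕ, ∫ ω, f i ω ∂μ ≤ u * (μ (A' i)).toReal := by
    intro i
    by_cases h0 : i = 0
    · simp [hfdef, hA'def, h0]
    · have h1 : 1 ≤ i := by omega
      have e1 : ∫ ω, f i ω ∂μ = ∫ ω in A i, X i ω ∂μ := by
        simp only [hfdef, hA'def, h0, if_false]
        exact integral_indicator (hAmeas i)
      have e2 : ∫ ω in A i, X i ω ∂μ = ∫ ω in {ω | i ≤ T ω}, X i ω ∂μ :=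
        (setIntegral_congr_set (hAeq i h1)).symm
      have e3 : μ {ω | i ≤ T ω} = μ (A i) := measure_congr (hAeq i h1)
      rw [e1, e2]
      calc ∫ ω in {ω | i ≤ T ω}, X i ω ∂μ ≤ u * (μ {ω | i ≤ T ω}).toReal := hcond i h1
        _ = u * (μ (A' i)).toReal := by rw [e3, hA'def]; simp [h0]
  -- summability
  have hsummb : Summable fun i => (μ (A' i)).toReal := by
    refine ENNReal.summable_toReal ?_
    rw [hA'sum]; exact hTlint
  have hsumma : Summable fun i => ∫ ω, f i ω ∂μ := by
    refine Summable.of_norm_bounded (g := fun i => (∫⁻ ω, (‖f i ω‖₊ : ℝ≥0∞) ∂μ).toReal)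
      (ENNReal.summable_toReal hfin) fun i => ?_
    show ‖∫ ω, f i ω ∂μ‖ ≤ (∫⁻ ω, (‖f i ω‖₊ : ℝ≥0∞) ∂μ).toReal
    rw [show (∫⁻ ω, (‖f i ω‖₊ : ℝ≥0∞) ∂μ) = ∫⁻ ω, ENNReal.ofReal ‖f i ω‖ ∂μ from
      lintegral_congr fun ω => ((ofReal_norm _).trans (enorm_eq_nnnorm _)).symm]
    exact norm_integral_le_lintegral_norm _
  have hsum_le : ∑' i, ∫ ω, f i ω ∂μ ≤ ∑' i, u * (μ (A' i)).toReal :=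
    Summable.tsum_le_tsum hterm hsumma (hsummb.mul_left u)
  -- compute the RHS
  have htoReal : ∑' i, u * (μ (A' i)).toReal
      = u * (∫⁻ ω, (T' ω : ℝ≥0∞) ∂μ).toReal := by
    rw [tsum_mul_left, ← hA'sum, ENNReal.tsum_toReal_eq fun i => measure_ne_top μ _]
  have hTint_eq : (∫⁻ ω, (T' ω : ℝ≥0∞) ∂μ).toReal = ∫ ω, (T ω : ℝ) ∂μ := by
    have e1 : ∫ ω, (T ω : ℝ) ∂μ = ∫ ω, (T' ω : ℝ) ∂μ :=
      integral_congr_ae (hTT'.mono fun ω h => congrArg _ h)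
    have e2 : ∫ ω, (T' ω : ℝ) ∂μ
        = (∫⁻ ω, ENNReal.ofReal ((T' ω : ℝ)) ∂μ).toReal :=
      integral_eq_lintegral_of_nonneg_ae (ae_of_all _ fun ω => by positivity)
        (Measurable.aestronglyMeasurable (by exact measurable_from_top.comp hT'meas))
    rw [e1, e2]
    congr 1
    exact lintegral_congr fun ω => by simp [ENNReal.ofReal_natCast]
  -- conclude
  have hfinal : g ≤ u * ∫ ω, (T ω : ℝ) ∂μ := by
    calc g ≤ ∫ ω, ∑ i ∈ Finset.Icc 1 (T' ω), X i ω ∂μ := hgS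
      _ = ∑' i, ∫ ω, f i ω ∂μ := hswap
      _ ≤ ∑' i, u * (μ (A' i)).toReal := hsum_le
      _ = u * (∫⁻ ω, (T' ω : ℝ≥0∞) ∂μ).toReal := htoReal
      _ = u * ∫ ω, (T ω : ℝ) ∂μ := by rw [hTint_eq]
  rw [div_le_iff₀ hu]
  linarith [hfinal]
end

section
/- Mutation monotonicity lemma: Let a, b ∈ {0,1}^n with |a|_1 < |b|_1, where |x|_1 denotes the number of one-bits. Let mut(x) denote the random string obtained by flipping each bit of x independently with probability p. If p ≤ 1/2, then for every 0 ≤ j ≤ n, P(|mut(a)|_1 ≤ j) ≥ P(|mut(b)|_1 ≤ j). -/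
open scoped BigOperators

/-- Number of one-bits of a bit string. -/
def oneCount {n : ℕ} (x : Fin n → Bool) : ℕ :=
  (Finset.univ.filter fun i => x i = true).card

/-- Hamming distance between two bit strings. -/
def hamDist {n : ℕ} (x y : Fin n → Bool) : ℕ :=
  (Finset.univ.filter fun i => x i ≠ y i).card

/-- Probability that standard bit-flip mutation with mutation probability `p`
turns `x` into `y`. -/
noncomputable def mutP {n : ℕ} (p : ℝ) (x y : Fin n → Bool) : ℝ :=
  p ^ hamDist x y * (1 - p) ^ (n - hamDist x y)

namespace MutMono

variable {n : ℕ}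

/-- Flip the `i`-th bit. -/
def bflip (i : Fin n) (y : Fin n → Bool) : Fin n → Bool :=
  Function.update y i (!(y i))

lemma bflip_apply_self (i : Fin n) (y : Fin n → Bool) : bflip i y i = !(y i) := by
  simp [bflip]

lemma bflip_apply_ne (i : Fin n) (y : Fin n → Bool) {k : Fin n} (hk : k ≠ i) :
    bflip i y k = y k := by
  simp [bflip, Function.update_of_ne hk]

lemma bflip_bflip (i : Fin n) (y : Fin n → Bool) : bflip i (bflip i y) = y := by
  funext k
  by_cases hk : k = i
  · subst hk; simp [bflip_apply_self]
  · rw [bflip_apply_ne i _ hk, bflip_apply_ne i _ hk]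

lemma bflip_injective (i : Fin n) : Function.Injective (bflip i) := by
  intro y z h
  have := congrArg (bflip i) h
  rwa [bflip_bflip, bflip_bflip] at this

lemma oneCount_bflip_of_false {i : Fin n} {y : Fin n → Bool} (h : y i = false) :
    oneCount (bflip i y) = oneCount y + 1 := by
  unfold oneCount
  have hset : (Finset.univ.filter fun k => bflip i y k = true)
      = insert i (Finset.univ.filter fun k => y k = true) := by
    ext k
    by_cases hk : k = i
    · subst hk; simp [bflip_apply_self, h]
    · simp [bflip_apply_ne i _ hk, hk]
  rw [hset, Finset.card_insert_of_notMem (by simp [h])]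

lemma oneCount_bflip_of_true {i : Fin n} {y : Fin n → Bool} (h : y i = true) :
    oneCount y = oneCount (bflip i y) + 1 := by
  have h' : bflip i y i = false := by simp [bflip_apply_self, h]
  have := oneCount_bflip_of_false h'
  rwa [bflip_bflip] at this

lemma hamDist_le (x y : Fin n → Bool) : hamDist x y ≤ n := by
  unfold hamDist
  calc (Finset.univ.filter fun i => x i ≠ y i).card ≤ (Finset.univ : Finset (Fin n)).card :=
        Finset.card_filter_le _ _
    _ = n := by simp

lemma hamDist_bflip_of_eq {x y : Fin n → Bool} {i : Fin n} (h : x i = y i) :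
    hamDist x (bflip i y) = hamDist x y + 1 := by
  unfold hamDist
  have hset : (Finset.univ.filter fun k => x k ≠ bflip i y k)
      = insert i (Finset.univ.filter fun k => x k ≠ y k) := by
    ext k
    by_cases hk : k = i
    · subst hk
      simp only [bflip_apply_self, Finset.mem_filter, Finset.mem_univ, true_and,
        Finset.mem_insert]
      constructor
      · intro _; simp
      · intro _; rw [h]; cases y k <;> simp
    · simp [bflip_apply_ne i _ hk, hk]
  rw [hset, Finset.card_insert_of_notMem (by simp [h])]

lemma hamDist_bflip_of_ne {x y : Fin n → Bool} {i : Fin n} (h : x i ≠ y i) :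
    hamDist x y = hamDist x (bflip i y) + 1 := by
  have h' : x i = bflip i y i := by
    rw [bflip_apply_self]
    cases hx : x i <;> cases hy : y i <;> simp_all
  have := hamDist_bflip_of_eq h'
  rwa [bflip_bflip] at this

lemma hamDist_update_left (x y : Fin n → Bool) (i : Fin n) :
    hamDist (Function.update x i (!(x i))) y = hamDist x (bflip i y) := by
  unfold hamDist
  congr 1
  ext k
  by_cases hk : k = i
  · subst hk
    simp only [Function.update_self, bflip_apply_self, Finset.mem_filter, Finset.mem_univ,
      true_and]
    cases hx : x k <;> cases hy : y k <;> simp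
  · simp [Function.update_of_ne hk, bflip_apply_ne i _ hk]

lemma mutP_nonneg {p : ℝ} (hp : 0 ≤ p) (hp1 : p ≤ 1) (x y : Fin n → Bool) :
    0 ≤ mutP p x y :=
  mul_nonneg (pow_nonneg hp _) (pow_nonneg (by linarith) _)

lemma q_succ_le {p : ℝ} (hp : 0 < p) (hp2 : p ≤ 1 / 2) {d : ℕ} (hd : d + 1 ≤ n) :
    p ^ (d + 1) * (1 - p) ^ (n - (d + 1)) ≤ p ^ d * (1 - p) ^ (n - d) := by
  have h1 : p ≤ 1 - p := by linarith
  have h2 : n - d = (n - (d + 1)) + 1 := by omega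
  rw [h2, pow_succ, pow_succ]
  have hA : (0:ℝ) ≤ (1 - p) ^ (n - (d + 1)) := pow_nonneg (by linarith) _
  have hB : (0:ℝ) ≤ p ^ d := pow_nonneg hp.le _
  have h3 : p ^ d * p * (1 - p) ^ (n - (d + 1)) ≤ p ^ d * (1 - p) * (1 - p) ^ (n - (d + 1)) :=
    mul_le_mul_of_nonneg_right (mul_le_mul_of_nonneg_left h1 hB) hA
  calc p ^ d * p * (1 - p) ^ (n - (d + 1))
      ≤ p ^ d * (1 - p) * (1 - p) ^ (n - (d + 1)) := h3
    _ = p ^ d * ((1 - p) ^ (n - (d + 1)) * (1 - p)) := by ring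

/-- The key single-bit step: setting a zero bit to one decreases the tail sum. -/
lemma step (p : ℝ) (hp : 0 < p) (hp2 : p ≤ 1 / 2) (j : ℕ) (x : Fin n → Bool) (i : Fin n)
    (hx : x i = false) :
    ∑ y ∈ Finset.univ.filter (fun y : Fin n → Bool => oneCount y ≤ j),
        mutP p (Function.update x i true) y ≤
      ∑ y ∈ Finset.univ.filter (fun y : Fin n → Bool => oneCount y ≤ j), mutP p x y := by
  classical
  set S : Finset (Fin n → Bool) := Finset.univ.filter (fun y : Fin n → Bool => oneCount y ≤ j)
    with hS
  have hmemS : ∀ y : Fin n → Bool, y ∈ S ↔ oneCount y ≤ j := by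
    intro y; simp [hS]
  have hnn : ∀ y : Fin n → Bool, 0 ≤ mutP p x y :=
    mutP_nonneg hp.le (by linarith) x
  have hrw : ∀ y : Fin n → Bool, mutP p (Function.update x i true) y = mutP p x (bflip i y) := by
    intro y
    have hupd : Function.update x i true = Function.update x i (!(x i)) := by rw [hx]; rfl
    unfold mutP
    rw [hupd, hamDist_update_left]
  set S' : Finset (Fin n → Bool) := S.image (bflip i) with hS'
  have hmemS' : ∀ z : Fin n → Bool, z ∈ S' ↔ bflip i z ∈ S := by
    intro z
    constructor
    · intro hz
      obtain ⟨w, hw, rfl⟩ := Finset.mem_image.mp hz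
      rwa [bflip_bflip]
    · intro hz
      exact Finset.mem_image.mpr ⟨bflip i z, hz, bflip_bflip _ _⟩
  have hstep1 : ∑ y ∈ S, mutP p (Function.update x i true) y = ∑ z ∈ S', mutP p x z := by
    rw [Finset.sum_congr rfl (fun y _ => hrw y)]
    rw [hS', Finset.sum_image (fun y _ z _ h => bflip_injective i h)]
  rw [hstep1]
  -- split both sums along membership in the other set
  have hsplit : ∀ U V : Finset (Fin n → Bool), ∑ z ∈ U, mutP p x z
      = ∑ z ∈ U ∩ V, mutP p x z + ∑ z ∈ U \ V, mutP p x z := by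
    intro U V
    rw [← Finset.sum_filter_add_sum_filter_not U (fun z => z ∈ V) (mutP p x)]
    have e1 : U.filter (fun z => z ∈ V) = U ∩ V := by
      ext z; simp [Finset.mem_inter]
    have e2 : U.filter (fun z => ¬ z ∈ V) = U \ V := by
      ext z; simp [Finset.mem_sdiff]
    rw [e1, e2]
  rw [hsplit S' S, hsplit S S', Finset.inter_comm]
  refine (add_le_add_iff_left _).mpr ?_
  -- key inequality between the two boundary sums
  set T : Finset (Fin n → Bool) := (S' \ S).image (bflip i) with hT
  have hTsub : T ⊆ S \ S' := by
    intro w hw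
    obtain ⟨z, hz, rfl⟩ := Finset.mem_image.mp hw
    rw [Finset.mem_sdiff] at hz
    rw [Finset.mem_sdiff]
    constructor
    · exact (hmemS' z).mp hz.1
    · intro hcon
      rw [hmemS', bflip_bflip] at hcon
      exact hz.2 hcon
  have hTfalse : ∀ w ∈ T, w i = false := by
    intro w hw
    obtain ⟨z, hz, rfl⟩ := Finset.mem_image.mp hw
    rw [Finset.mem_sdiff] at hz
    have h1 : bflip i z ∈ S := (hmemS' z).mp hz.1
    have h2 : z ∉ S := hz.2
    rw [hmemS] at h1
    rw [hmemS] at h2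
    push_neg at h2
    by_contra hcon
    have hwi : bflip i z i = true := by cases h : bflip i z i <;> simp_all
    have := oneCount_bflip_of_true hwi
    rw [bflip_bflip] at this
    omega
  have hstep2 : ∑ z ∈ S' \ S, mutP p x z = ∑ w ∈ T, mutP p x (bflip i w) := by
    rw [hT, Finset.sum_image (fun y _ z _ h => bflip_injective i h)]
    refine Finset.sum_congr rfl ?_
    intro z _
    rw [bflip_bflip]
  rw [hstep2]
  calc ∑ w ∈ T, mutP p x (bflip i w) ≤ ∑ w ∈ T, mutP p x w := by
        refine Finset.sum_le_sum ?_
        intro w hw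
        have hwi : w i = false := hTfalse w hw
        have hxw : x i = w i := by rw [hx, hwi]
        have hd : hamDist x (bflip i w) = hamDist x w + 1 := hamDist_bflip_of_eq hxw
        have hdn : hamDist x w + 1 ≤ n := hd ▸ hamDist_le x (bflip i w)
        unfold mutP
        rw [hd]
        exact q_succ_le hp hp2 hdn
    _ ≤ ∑ w ∈ S \ S', mutP p x w :=
        Finset.sum_le_sum_of_subset_of_nonneg hTsub (fun w _ _ => hnn w)

lemma oneCount_comp (σ : Equiv.Perm (Fin n)) (y : Fin n → Bool) :
    oneCount (y ∘ σ) = oneCount y := by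
  unfold oneCount
  apply Finset.card_equiv σ
  intro k
  simp

lemma hamDist_comp (σ : Equiv.Perm (Fin n)) (x y : Fin n → Bool) :
    hamDist (x ∘ σ) (y ∘ σ) = hamDist x y := by
  unfold hamDist
  apply Finset.card_equiv σ
  intro k
  simp

/-- Permutation invariance of the tail sum. -/
lemma sum_comp (p : ℝ) (j : ℕ) (x : Fin n → Bool) (σ : Equiv.Perm (Fin n)) :
    ∑ y ∈ Finset.univ.filter (fun y : Fin n → Bool => oneCount y ≤ j), mutP p (x ∘ σ) y =
      ∑ y ∈ Finset.univ.filter (fun y : Fin n → Bool => oneCount y ≤ j), mutP p x y := by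
  classical
  refine Finset.sum_nbij' (fun y => y ∘ σ.symm) (fun y => y ∘ σ) ?_ ?_ ?_ ?_ ?_
  · intro y hy
    simp only [Finset.mem_filter, Finset.mem_univ, true_and] at hy ⊢
    rwa [oneCount_comp σ.symm]
  · intro y hy
    simp only [Finset.mem_filter, Finset.mem_univ, true_and] at hy ⊢
    rwa [oneCount_comp σ]
  · intro y _; funext k; simp
  · intro y _; funext k; simp
  · intro y _
    unfold mutP
    congr 1
    · congr 1
      have : (y ∘ ⇑σ.symm) ∘ ⇑σ = y := by funext k; simp
      rw [← hamDist_comp σ x (y ∘ σ.symm), this]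
    · congr 2
      have : (y ∘ ⇑σ.symm) ∘ ⇑σ = y := by funext k; simp
      rw [← hamDist_comp σ x (y ∘ σ.symm), this]

lemma hamDist_eq_zero {a b : Fin n → Bool} (h : hamDist a b = 0) : a = b := by
  unfold hamDist at h
  rw [Finset.card_eq_zero, Finset.eq_empty_iff_forall_notMem] at h
  funext k
  have := h k
  simp only [Finset.mem_filter, Finset.mem_univ, true_and] at this
  by_contra hc
  exact this hc

lemma main_ind (p : ℝ) (hp : 0 < p) (hp2 : p ≤ 1 / 2) (j : ℕ) :
    ∀ d (a b : Fin n → Bool), hamDist a b ≤ d → oneCount a ≤ oneCount b →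
      ∑ y ∈ Finset.univ.filter (fun y : Fin n → Bool => oneCount y ≤ j), mutP p b y ≤
        ∑ y ∈ Finset.univ.filter (fun y : Fin n → Bool => oneCount y ≤ j), mutP p a y := by
  intro d
  induction d with
  | zero =>
    intro a b hd _
    have : a = b := hamDist_eq_zero (Nat.le_zero.mp hd)
    rw [this]
  | succ d ih =>
    intro a b hd hcnt
    by_cases hab : a = b
    · rw [hab]
    rcases lt_or_eq_of_le hcnt with hlt | heq
    · -- strict inequality of counts: remove a one-bit from b
      have hex : ∃ i, a i = false ∧ b i = true := by
        by_contra hno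
        push_neg at hno
        have hsub : (Finset.univ.filter fun k => b k = true) ⊆
            (Finset.univ.filter fun k => a k = true) := by
          intro k hk
          simp only [Finset.mem_filter, Finset.mem_univ, true_and] at hk ⊢
          by_contra hak
          have hak' : a k = false := by cases h : a k <;> simp_all
          exact (hno k hak') hk
        have := Finset.card_le_card hsub
        unfold oneCount at hlt
        omega
      obtain ⟨i, hai, hbi⟩ := hex
      set b' := bflip i b with hb'
      have hb'i : b' i = false := by rw [hb', bflip_apply_self, hbi]; rfl
      have hbb' : b = Function.update b' i true := by
        funext k
        by_cases hk : k = i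
        · subst hk; simp [hbi]
        · rw [Function.update_of_ne hk, hb', bflip_apply_ne i _ hk]
      have hcnt' : oneCount b = oneCount b' + 1 := oneCount_bflip_of_true hbi
      have hdist' : hamDist a b = hamDist a b' + 1 :=
        hamDist_bflip_of_ne (by rw [hai, hbi]; simp)
      calc ∑ y ∈ Finset.univ.filter (fun y : Fin n → Bool => oneCount y ≤ j), mutP p b y
          ≤ ∑ y ∈ Finset.univ.filter (fun y : Fin n → Bool => oneCount y ≤ j), mutP p b' y := by
            rw [hbb']
            exact step p hp hp2 j b' i hb'i
        _ ≤ ∑ y ∈ Finset.univ.filter (fun y : Fin n → Bool => oneCount y ≤ j), mutP p a y :=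
            ih a b' (by omega) (by omega)
    · -- equal counts, a ≠ b: swap a mismatched pair in b
      have hex1 : ∃ i, a i = true ∧ b i = false := by
        by_contra hno
        push_neg at hno
        have hsub : (Finset.univ.filter fun k => a k = true) ⊆
            (Finset.univ.filter fun k => b k = true) := by
          intro k hk
          simp only [Finset.mem_filter, Finset.mem_univ, true_and] at hk ⊢
          by_contra hbk
          exact (hno k hk) (by cases h : b k <;> simp_all)
        have heqset := Finset.eq_of_subset_of_card_le hsub (le_of_eq heq.symm)
        apply hab
        funext k
        have : (a k = true) ↔ (b k = true) := by
          constructor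
          · intro h; have := heqset ▸ (Finset.mem_filter.mpr ⟨Finset.mem_univ k, h⟩)
            exact (Finset.mem_filter.mp this).2
          · intro h
            have : k ∈ (Finset.univ.filter fun k => a k = true) := by
              rw [heqset]; exact Finset.mem_filter.mpr ⟨Finset.mem_univ k, h⟩
            exact (Finset.mem_filter.mp this).2
        cases ha : a k <;> cases hb : b k <;> simp_all
      have hex2 : ∃ i', a i' = false ∧ b i' = true := by
        by_contra hno
        push_neg at hno
        have hsub : (Finset.univ.filter fun k => b k = true) ⊆
            (Finset.univ.filter fun k => a k = true) := by
          intro k hk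
          simp only [Finset.mem_filter, Finset.mem_univ, true_and] at hk ⊢
          by_contra hak
          exact (hno k (by cases h : a k <;> simp_all)) hk
        have heqset := Finset.eq_of_subset_of_card_le hsub (le_of_eq heq)
        apply hab
        funext k
        have : (a k = true) ↔ (b k = true) := by
          constructor
          · intro h
            have : k ∈ (Finset.univ.filter fun k => b k = true) := by
              rw [heqset]; exact Finset.mem_filter.mpr ⟨Finset.mem_univ k, h⟩
            exact (Finset.mem_filter.mp this).2
          · intro h; have := heqset ▸ (Finset.mem_filter.mpr ⟨Finset.mem_univ k, h⟩)
            exact (Finset.mem_filter.mp this).2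
        cases ha : a k <;> cases hb : b k <;> simp_all
      obtain ⟨i, hai, hbi⟩ := hex1
      obtain ⟨i', hai', hbi'⟩ := hex2
      have hne : i ≠ i' := by
        intro h; rw [h, hai'] at hai; exact Bool.noConfusion hai
      set σ := Equiv.swap i i' with hσ
      set b' := b ∘ σ with hb'
      have hFb : ∑ y ∈ Finset.univ.filter (fun y : Fin n → Bool => oneCount y ≤ j),
          mutP p b' y =
          ∑ y ∈ Finset.univ.filter (fun y : Fin n → Bool => oneCount y ≤ j), mutP p b y :=
        sum_comp p j b σ
      have hcnt' : oneCount b' = oneCount b := oneCount_comp σ b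
      -- Hamming distance drops by 2
      have hb'i : b' i = true := by
        rw [hb']; simp only [Function.comp_apply, hσ, Equiv.swap_apply_left]; exact hbi'
      have hb'i' : b' i' = false := by
        rw [hb']; simp only [Function.comp_apply, hσ, Equiv.swap_apply_right]; exact hbi
      have hb'k : ∀ k, k ≠ i → k ≠ i' → b' k = b k := by
        intro k hk hk'
        rw [hb']; simp only [Function.comp_apply, hσ, Equiv.swap_apply_of_ne_of_ne hk hk']
      have hdist2 : hamDist a b = hamDist a b' + 2 := by
        unfold hamDist
        have hset : (Finset.univ.filter fun k => a k ≠ b k)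
            = insert i (insert i' (Finset.univ.filter fun k => a k ≠ b' k)) := by
          ext k
          by_cases hk : k = i
          · subst hk
            simp only [Finset.mem_filter, Finset.mem_univ, true_and, Finset.mem_insert]
            constructor
            · intro _; simp
            · intro _; rw [hai, hbi]; simp
          · by_cases hk' : k = i'
            · subst hk'
              simp only [Finset.mem_filter, Finset.mem_univ, true_and, Finset.mem_insert]
              constructor
              · intro _; simp
              · intro _; rw [hai', hbi']; simp
            · simp only [Finset.mem_filter, Finset.mem_univ, true_and, Finset.mem_insert,
                hk, hk', false_or]
              rw [hb'k k hk hk']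
        have hni' : i' ∉ (Finset.univ.filter fun k => a k ≠ b' k) := by
          simp [hai', hb'i']
        have hni : i ∉ insert i' (Finset.univ.filter fun k => a k ≠ b' k) := by
          simp only [Finset.mem_insert, Finset.mem_filter, Finset.mem_univ, true_and]
          push_neg
          exact ⟨hne, by rw [hai, hb'i]⟩
        rw [hset, Finset.card_insert_of_notMem hni, Finset.card_insert_of_notMem hni']
      rw [← hFb]
      exact ih a b' (by omega) (by omega)

end MutMono

/-- Mutation monotonicity: if `a` has fewer one-bits than `b` and `p ≤ 1/2`, then
`P(|mut(a)|₁ ≤ j) ≥ P(|mut(b)|₁ ≤ j)` for every `j`. -/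
theorem mutation_monotonicity {n : ℕ} (p : ℝ) (hp : 0 < p) (hp2 : p ≤ 1 / 2)
    (a b : Fin n → Bool) (hab : oneCount a < oneCount b) (j : ℕ) (hj : j ≤ n) :
    ∑ y ∈ Finset.univ.filter (fun y : Fin n → Bool => oneCount y ≤ j), mutP p b y ≤
      ∑ y ∈ Finset.univ.filter (fun y : Fin n → Bool => oneCount y ≤ j), mutP p a y :=
  MutMono.main_ind p hp hp2 j (hamDist a b) a b le_rfl hab.le
end

section
/- Expected progress upper bound on OneMax: Consider the (1+1) EA with mutation probability p minimizing OneMax. If the current search point has i one-bits and I' denotes the number of one-bits of the subsequent search point (after elitist selection, so I' ≤ i), then E(i − I') ≤ i·p·(1 − p + i·p²/(1−p))^{n−i}. -/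
open scoped BigOperators
open Finset

/-- Union-bound tail estimate for the binomial distribution. -/
lemma binom_tail (p : ℝ) (hp : 0 ≤ p) (hp1 : p ≤ 1) (m b : ℕ) :
    ∑ a ∈ range (m + 1), (if b ≤ a then (m.choose a : ℝ) * p ^ a * (1 - p) ^ (m - a) else 0)
      ≤ (m.choose b : ℝ) * p ^ b := by
  have h1p : 0 ≤ 1 - p := by linarith
  rcases le_or_gt b m with hbm | hbm
  · have : ∑ a ∈ range (m + 1),
        (if b ≤ a then (m.choose a : ℝ) * p ^ a * (1 - p) ^ (m - a) else 0)
        = ∑ a ∈ Ico b (m + 1), (m.choose a : ℝ) * p ^ a * (1 - p) ^ (m - a) := by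
      rw [← sum_filter]
      congr 1
      ext a
      simp [Nat.lt_succ_iff, and_comm]
    rw [this, sum_Ico_eq_sum_range]
    have hsub : m + 1 - b = (m - b) + 1 := by omega
    rw [hsub]
    calc ∑ a ∈ range (m - b + 1), (m.choose (b + a) : ℝ) * p ^ (b + a) * (1 - p) ^ (m - (b + a))
        ≤ ∑ a ∈ range (m - b + 1),
            (m.choose b : ℝ) * p ^ b * (((m - b).choose a : ℝ) * p ^ a * (1 - p) ^ (m - b - a)) := by
          refine sum_le_sum fun a ha => ?_
          rw [mem_range] at ha
          have hba : b + a ≤ m := by omega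
          have hc : (m.choose (b + a) : ℝ) ≤ (m.choose b : ℝ) * ((m - b).choose a) := by
            have := Nat.choose_mul (n := m) (Nat.le_add_right b a)
            have h2 : m.choose (b + a) ≤ m.choose b * (m - b).choose a := by
              have hpos : 0 < (b + a).choose b := Nat.choose_pos (Nat.le_add_right b a)
              calc m.choose (b + a) ≤ m.choose (b + a) * (b + a).choose b := by
                    nlinarith
                _ = m.choose b * (m - b).choose (b + a - b) := this
                _ = m.choose b * (m - b).choose a := by rw [Nat.add_sub_cancel_left]
            exact_mod_cast h2
          have hm : m - (b + a) = m - b - a := by omega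
          rw [hm, pow_add]
          have hnn : (0:ℝ) ≤ p ^ b * p ^ a * (1 - p) ^ (m - b - a) :=
            mul_nonneg (mul_nonneg (pow_nonneg hp _) (pow_nonneg hp _)) (pow_nonneg h1p _)
          nlinarith [mul_le_mul_of_nonneg_right hc hnn, (Nat.cast_nonneg ((m-b).choose a) : (0:ℝ) ≤ _),
            pow_nonneg hp b, pow_nonneg hp a, pow_nonneg h1p (m - b - a)]
      _ = (m.choose b : ℝ) * p ^ b *
            ∑ a ∈ range (m - b + 1), ((m - b).choose a : ℝ) * p ^ a * (1 - p) ^ (m - b - a) := by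
          rw [mul_sum]
      _ ≤ (m.choose b : ℝ) * p ^ b := by
          have hbin : ∑ a ∈ range (m - b + 1), ((m - b).choose a : ℝ) * p ^ a * (1 - p) ^ (m - b - a)
              = (p + (1 - p)) ^ (m - b) := by
            rw [add_pow]
            refine sum_congr rfl fun a ha => ?_
            ring
          rw [hbin]
          simp
  · have : ∀ a ∈ range (m + 1),
        (if b ≤ a then (m.choose a : ℝ) * p ^ a * (1 - p) ^ (m - a) else 0) = 0 := by
      intro a ha
      rw [mem_range] at ha
      rw [if_neg (by omega)]
    rw [sum_congr rfl this]
    simp [mul_nonneg (Nat.cast_nonneg _) (pow_nonneg hp b)]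

/-- Key per-`b` bound: the expected one-bit loss among `i` one-positions, restricted to
outcomes beating `b` new one-bits, is at most `i p (i p / (1-p))^b`. -/
lemma key_bound (p : ℝ) (hp : 0 < p) (hp1 : p < 1) (i b : ℕ) :
    ∑ a ∈ range (i + 1),
        (i.choose a : ℝ) * (p ^ a * (1 - p) ^ (i - a) * ((a : ℝ) - (min a b : ℕ)))
      ≤ (i : ℝ) * p * ((i : ℝ) * p / (1 - p)) ^ b := by
  have h1p : (0:ℝ) < 1 - p := by linarith
  rcases Nat.eq_zero_or_pos i with rfl | hi
  · simp
  obtain ⟨m, rfl⟩ : ∃ m, i = m + 1 := ⟨i - 1, by omega⟩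
  rw [show (m + 1 + 1) = (m + 1) + 1 from rfl, Finset.sum_range_succ']
  have h0 : (((m + 1).choose 0 : ℝ) *
      (p ^ 0 * (1 - p) ^ (m + 1 - 0) * (((0:ℕ) : ℝ) - ((min 0 b : ℕ) : ℝ)))) = 0 := by simp
  rw [h0, add_zero]
  have hstep : ∀ a' ∈ range (m + 1),
      ((m+1).choose (a'+1) : ℝ) *
        (p ^ (a'+1) * (1 - p) ^ (m + 1 - (a'+1)) * (((a'+1 : ℕ) : ℝ) - (min (a'+1) b : ℕ))) ≤
      ((m:ℝ)+1) * p *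
        (if b ≤ a' then (m.choose a' : ℝ) * p ^ a' * (1 - p) ^ (m - a') else 0) := by
    intro a' _
    have hcc : ((m+1).choose (a'+1) : ℝ) * (a'+1) = ((m:ℝ)+1) * (m.choose a') := by
      have := Nat.add_one_mul_choose_eq m a'
      exact_mod_cast (by exact_mod_cast this.symm : ((m+1).choose (a'+1)) * (a'+1) = (m+1) * m.choose a')
    have hsub : m + 1 - (a' + 1) = m - a' := by omega
    by_cases hb : b ≤ a'
    · have hmin : min (a' + 1) b = b := by omega
      rw [if_pos hb]
      have hle : ((a':ℝ) + 1 - b) ≤ (a' : ℝ) + 1 := by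
        have : (0:ℝ) ≤ (b:ℕ) := Nat.cast_nonneg b
        linarith
      have hnn : (0:ℝ) ≤ ((m+1).choose (a'+1) : ℝ) * (p ^ (a'+1) * (1 - p) ^ (m - a')) :=
        mul_nonneg (Nat.cast_nonneg _)
          (mul_nonneg (pow_nonneg hp.le _) (pow_nonneg h1p.le _))
      calc ((m+1).choose (a'+1) : ℝ) *
            (p ^ (a'+1) * (1 - p) ^ (m + 1 - (a'+1)) * (((a'+1 : ℕ) : ℝ) - (min (a'+1) b : ℕ)))
          = ((m+1).choose (a'+1) : ℝ) * (p ^ (a'+1) * (1 - p) ^ (m - a') * ((a':ℝ) + 1 - b)) := by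
            rw [hsub, hmin]
            push_cast
            ring
        _ ≤ ((m+1).choose (a'+1) : ℝ) * (p ^ (a'+1) * (1 - p) ^ (m - a') * ((a':ℝ) + 1)) := by
            have := mul_le_mul_of_nonneg_left hle hnn
            nlinarith [hnn]
        _ = (((m+1).choose (a'+1) : ℝ) * ((a':ℝ)+1)) * (p ^ (a'+1) * (1 - p) ^ (m - a')) := by
            ring
        _ = ((m:ℝ)+1) * p * ((m.choose a' : ℝ) * p ^ a' * (1 - p) ^ (m - a')) := by
            rw [hcc, pow_succ]; ring
    · have hmin : min (a' + 1) b = a' + 1 := by omega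
      rw [if_neg hb, hmin]
      push_cast
      simp [mul_comm]
  calc ∑ a' ∈ range (m + 1), ((m+1).choose (a'+1) : ℝ) *
        (p ^ (a'+1) * (1 - p) ^ (m + 1 - (a'+1)) * (((a'+1 : ℕ) : ℝ) - (min (a'+1) b : ℕ)))
      ≤ ∑ a' ∈ range (m + 1), ((m:ℝ)+1) * p *
          (if b ≤ a' then (m.choose a' : ℝ) * p ^ a' * (1 - p) ^ (m - a') else 0) :=
        sum_le_sum hstep
    _ = ((m:ℝ)+1) * p * ∑ a' ∈ range (m + 1),
          (if b ≤ a' then (m.choose a' : ℝ) * p ^ a' * (1 - p) ^ (m - a') else 0) := by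
        rw [mul_sum]
    _ ≤ ((m:ℝ)+1) * p * ((m.choose b : ℝ) * p ^ b) := by
        have := binom_tail p hp.le hp1.le m b
        have hmp : (0:ℝ) ≤ ((m:ℝ)+1) * p := by positivity
        exact mul_le_mul_of_nonneg_left this hmp
    _ ≤ ((m:ℝ)+1) * p * (((m:ℝ)+1) * p / (1 - p)) ^ b := by
        have hmp : (0:ℝ) ≤ ((m:ℝ)+1) * p := by positivity
        refine mul_le_mul_of_nonneg_left ?_ hmp
        have h1 : (m.choose b : ℝ) ≤ ((m:ℝ)+1) ^ b := by
          have : (m.choose b : ℕ) ≤ (m+1) ^ b :=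
            le_trans (Nat.choose_le_pow m b) (Nat.pow_le_pow_left (Nat.le_succ m) b)
          exact_mod_cast this
        have h2 : (((m:ℝ)+1) * p / (1 - p)) ^ b = ((m:ℝ)+1) ^ b * p ^ b / (1 - p) ^ b := by
          rw [div_pow, mul_pow]
        rw [h2]
        rw [le_div_iff₀ (pow_pos h1p b)]
        have h3 : (1 - p) ^ b ≤ 1 := pow_le_one₀ h1p.le (by linarith)
        have hpb : (0:ℝ) ≤ p ^ b := pow_nonneg hp.le b
        nlinarith [mul_le_mul_of_nonneg_right h1 hpb, mul_nonneg (Nat.cast_nonneg (m.choose b)) hpb]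
    _ = ((m + 1 : ℕ) : ℝ) * p * (((m + 1 : ℕ) : ℝ) * p / (1 - p)) ^ b := by
        push_cast; ring


/-- Expected progress of the (1+1) EA on OneMax: from a point `x` with
`i = oneCount x` one-bits, writing `I'` for the number of one-bits after one
mutation-selection step (so `I' = min i |mut x|₁` under elitist selection),
`E(i − I') ≤ i p (1 − p + i p² / (1 − p))^{n−i}`. -/
theorem onemax_expected_progress_upper
    {n : ℕ} (p : ℝ) (hp : 0 < p) (hp1 : p < 1) (x : Fin n → Bool) :
    ∑ y : Fin n → Bool,
        mutP p x y * ((oneCount x : ℝ) - (min (oneCount x) (oneCount y) : ℕ)) ≤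
      (oneCount x : ℝ) * p *
        (1 - p + (oneCount x : ℝ) * p ^ 2 / (1 - p)) ^ (n - oneCount x) := by
  classical
  have h1p : (0:ℝ) < 1 - p := by linarith
  set S : Finset (Fin n) := Finset.univ.filter (fun j => x j = true) with hS
  set T : Finset (Fin n) := Finset.univ.filter (fun j => ¬ x j = true) with hT
  have hSi : S.card = oneCount x := rfl
  set i : ℕ := oneCount x with hidef
  have hST : S.card + T.card = n := by
    rw [Finset.card_filter_add_card_filter_not]
    simp
  have hin : i ≤ n := by omega
  have hTc : T.card = n - i := by omega
  have hSTdisj : Disjoint S T := by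
    rw [Finset.disjoint_left]
    intro j hjS hjT
    rw [hS, Finset.mem_filter] at hjS
    rw [hT, Finset.mem_filter] at hjT
    exact hjT.2 hjS.2
  -- Step 1: reindex the sum over offspring by the pair (flipped one-bits, flipped zero-bits).
  have hre : ∑ y : Fin n → Bool,
        mutP p x y * ((i : ℝ) - (min i (oneCount y) : ℕ))
      = ∑ z ∈ S.powerset ×ˢ T.powerset,
          p ^ (z.1.card + z.2.card) * (1 - p) ^ (n - (z.1.card + z.2.card)) *
            ((z.1.card : ℝ) - (min z.1.card z.2.card : ℕ)) := by
    refine Finset.sum_nbij'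
      (fun y => (S.filter (fun j => y j = false), T.filter (fun j => y j = true)))
      (fun z j => if j ∈ z.1 then false else if j ∈ z.2 then true else x j)
      (fun y _ => ?_) (fun z _ => Finset.mem_univ _) (fun y _ => ?_) (fun z hz => ?_)
      (fun y _ => ?_)
    · rw [Finset.mem_product, Finset.mem_powerset, Finset.mem_powerset]
      exact ⟨Finset.filter_subset _ _, Finset.filter_subset _ _⟩
    · -- left inverse
      funext j
      show (if j ∈ S.filter (fun k => y k = false) then false
        else if j ∈ T.filter (fun k => y k = true) then true else x j) = y j
      have hjS : j ∈ S ↔ x j = true := by rw [hS]; simp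
      have hjT : j ∈ T ↔ ¬ x j = true := by rw [hT]; simp
      have m1 : j ∈ S.filter (fun k => y k = false) ↔ (x j = true ∧ y j = false) := by
        rw [Finset.mem_filter, hjS]
      have m2 : j ∈ T.filter (fun k => y k = true) ↔ (¬ x j = true ∧ y j = true) := by
        rw [Finset.mem_filter, hjT]
      by_cases hx : x j = true <;> cases hy : y j
      · rw [if_pos (m1.mpr ⟨hx, hy⟩)]
      · have n1 : j ∉ S.filter (fun k => y k = false) := fun h => by
          have h2 := (m1.mp h).2; rw [h2] at hy; exact Bool.noConfusion hy
        have n2 : j ∉ T.filter (fun k => y k = true) := fun h => (m2.mp h).1 hx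
        rw [if_neg n1, if_neg n2, hx]
      · have n1 : j ∉ S.filter (fun k => y k = false) := fun h => hx (m1.mp h).1
        have n2 : j ∉ T.filter (fun k => y k = true) := fun h => by
          have h2 := (m2.mp h).2; rw [h2] at hy; exact Bool.noConfusion hy
        rw [if_neg n1, if_neg n2]
        exact Bool.not_eq_true _ |>.mp hx
      · rw [if_neg (fun h => hx (m1.mp h).1), if_pos (m2.mpr ⟨hx, hy⟩)]
    · -- right inverse
      rw [Finset.mem_product, Finset.mem_powerset, Finset.mem_powerset] at hz
      obtain ⟨hA, hB⟩ := hz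
      have hxA : ∀ j ∈ z.1, x j = true := fun j hj => by
        have := hA hj; rw [hS, Finset.mem_filter] at this; exact this.2
      have hxB : ∀ j ∈ z.2, x j = false := fun j hj => by
        have := hB hj; rw [hT, Finset.mem_filter] at this
        exact Bool.not_eq_true _ |>.mp this.2
      have hABdisj : Disjoint z.1 z.2 := hSTdisj.mono hA hB
      have e1 : S.filter (fun j =>
          (if j ∈ z.1 then false else if j ∈ z.2 then true else x j) = false) = z.1 := by
        ext j
        by_cases hj1 : j ∈ z.1
        · simp [hj1, hA hj1]
        · by_cases hj2 : j ∈ z.2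
          · have : j ∉ S := Finset.disjoint_right.mp hSTdisj (hB hj2)
            simp [hj1, hj2, this]
          · simp [hj1, hj2, hS, Finset.mem_filter]
      have e2 : T.filter (fun j =>
          (if j ∈ z.1 then false else if j ∈ z.2 then true else x j) = true) = z.2 := by
        ext j
        by_cases hj1 : j ∈ z.1
        · have hjT : j ∉ T := Finset.disjoint_left.mp hSTdisj (hA hj1)
          have hj2 : j ∉ z.2 := Finset.disjoint_left.mp hABdisj hj1
          simp [hj1, hjT, hj2]
        · by_cases hj2 : j ∈ z.2
          · simp [hj1, hj2, hB hj2]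
          · simp only [Finset.mem_filter, if_neg hj1, if_neg hj2, iff_false, hj2]
            intro hmem
            rcases hmem with ⟨hjT, hxj⟩
            rw [hT, Finset.mem_filter] at hjT
            exact hjT.2 hxj
      exact Prod.ext e1 e2
    · -- value equality
      set A : Finset (Fin n) := S.filter (fun j => y j = false) with hAdef
      set B : Finset (Fin n) := T.filter (fun j => y j = true) with hBdef
      have hA : A ⊆ S := Finset.filter_subset _ _
      have hB : B ⊆ T := Finset.filter_subset _ _
      have haS : A.card ≤ i := by rw [← hSi]; exact Finset.card_le_card hA
      have hbT : B.card ≤ n - i := by rw [← hTc]; exact Finset.card_le_card hB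
      have hham : hamDist x y = A.card + B.card := by
        have hset : Finset.univ.filter (fun j => x j ≠ y j) = A ∪ B := by
          ext j
          simp only [Finset.mem_filter, Finset.mem_univ, true_and, Finset.mem_union,
            hAdef, hBdef, hS, hT]
          cases hx : x j <;> cases hy : y j <;> simp [hx, hy]
        rw [hamDist, hset, Finset.card_union_of_disjoint (hSTdisj.mono hA hB)]
      have hone : oneCount y = (i - A.card) + B.card := by
        have hset : Finset.univ.filter (fun j => y j = true) = (S \ A) ∪ B := by
          ext j
          simp only [Finset.mem_filter, Finset.mem_univ, true_and, Finset.mem_union,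
            Finset.mem_sdiff, hAdef, hBdef, hS, hT]
          cases hx : x j <;> cases hy : y j <;> simp [hx, hy]
        have hdisj2 : Disjoint (S \ A) B :=
          hSTdisj.mono (Finset.sdiff_subset) hB
        rw [oneCount, hset, Finset.card_union_of_disjoint hdisj2,
          Finset.card_sdiff_of_subset hA, hSi]
      have hmin : min i (oneCount y) = i - A.card + min A.card B.card := by
        rw [hone]; omega
      have hcast : ((i : ℝ) - (min i (oneCount y) : ℕ))
          = ((A.card : ℝ) - (min A.card B.card : ℕ)) := by
        rw [hmin]
        have : ((i - A.card + min A.card B.card : ℕ) : ℝ)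
            = (i : ℝ) - A.card + min A.card B.card := by
          push_cast [Nat.cast_sub haS]
          ring
        rw [this]
        ring
      rw [mutP, hham, hcast]
  rw [hre, Finset.sum_product, Finset.sum_comm]
  -- Step 2: bound the inner sum over A for each fixed B.
  have hinner : ∀ B ∈ T.powerset,
      ∑ A ∈ S.powerset,
          p ^ (A.card + B.card) * (1 - p) ^ (n - (A.card + B.card)) *
            ((A.card : ℝ) - (min A.card B.card : ℕ))
        ≤ (i : ℝ) * p * ((i : ℝ) * p ^ 2 / (1 - p)) ^ B.card *
            (1 - p) ^ (T.card - B.card) := by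
    intro B hB
    rw [Finset.mem_powerset] at hB
    have hb : B.card ≤ n - i := by rw [← hTc]; exact Finset.card_le_card hB
    set b : ℕ := B.card with hbdef
    have hsplit : ∀ A ∈ S.powerset,
        p ^ (A.card + b) * (1 - p) ^ (n - (A.card + b)) *
            ((A.card : ℝ) - (min A.card b : ℕ))
          = (p ^ b * (1 - p) ^ ((n - i) - b)) *
              (p ^ A.card * (1 - p) ^ (i - A.card) * ((A.card : ℝ) - (min A.card b : ℕ))) := by
      intro A hA
      rw [Finset.mem_powerset] at hA
      have haS : A.card ≤ i := by rw [← hSi]; exact Finset.card_le_card hA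
      have hexp : n - (A.card + b) = (i - A.card) + ((n - i) - b) := by omega
      rw [hexp, pow_add, pow_add]
      ring
    rw [Finset.sum_congr rfl hsplit, ← Finset.mul_sum]
    have hpow : ∑ A ∈ S.powerset,
        p ^ A.card * (1 - p) ^ (i - A.card) * ((A.card : ℝ) - (min A.card b : ℕ))
        = ∑ a ∈ Finset.range (i + 1),
            (i.choose a : ℝ) * (p ^ a * (1 - p) ^ (i - a) * ((a : ℝ) - (min a b : ℕ))) := by
      rw [Finset.sum_powerset_apply_card
        (fun a => p ^ a * (1 - p) ^ (i - a) * ((a : ℝ) - (min a b : ℕ)))]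
      rw [hSi]
      exact Finset.sum_congr rfl fun a _ => by rw [nsmul_eq_mul]
    rw [hpow]
    have hkey := key_bound p hp hp1 i b
    have hnn : (0:ℝ) ≤ p ^ b * (1 - p) ^ ((n - i) - b) :=
      mul_nonneg (pow_nonneg hp.le _) (pow_nonneg h1p.le _)
    calc (p ^ b * (1 - p) ^ ((n - i) - b)) *
          ∑ a ∈ Finset.range (i + 1),
            (i.choose a : ℝ) * (p ^ a * (1 - p) ^ (i - a) * ((a : ℝ) - (min a b : ℕ)))
        ≤ (p ^ b * (1 - p) ^ ((n - i) - b)) * ((i : ℝ) * p * ((i : ℝ) * p / (1 - p)) ^ b) :=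
          mul_le_mul_of_nonneg_left hkey hnn
      _ = (i : ℝ) * p * ((i : ℝ) * p ^ 2 / (1 - p)) ^ b * (1 - p) ^ (T.card - b) := by
          rw [hTc]
          have : ((i : ℝ) * p ^ 2 / (1 - p)) ^ b = ((i : ℝ) * p / (1 - p)) ^ b * p ^ b := by
            rw [← mul_pow]
            congr 1
            field_simp
          rw [this]
          ring
  calc ∑ B ∈ T.powerset, ∑ A ∈ S.powerset,
        p ^ (A.card + B.card) * (1 - p) ^ (n - (A.card + B.card)) *
          ((A.card : ℝ) - (min A.card B.card : ℕ))
      ≤ ∑ B ∈ T.powerset, (i : ℝ) * p * ((i : ℝ) * p ^ 2 / (1 - p)) ^ B.card *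
          (1 - p) ^ (T.card - B.card) := Finset.sum_le_sum hinner
    _ = (i : ℝ) * p * ∑ B ∈ T.powerset,
          ((i : ℝ) * p ^ 2 / (1 - p)) ^ B.card * (1 - p) ^ (T.card - B.card) := by
        rw [Finset.mul_sum]
        exact Finset.sum_congr rfl fun B _ => by ring
    _ = (i : ℝ) * p * ((i : ℝ) * p ^ 2 / (1 - p) + (1 - p)) ^ T.card := by
        rw [Finset.sum_pow_mul_eq_add_pow]
    _ = (i : ℝ) * p * (1 - p + (i : ℝ) * p ^ 2 / (1 - p)) ^ (n - i) := by
        rw [hTc, add_comm]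
end

section
/- The single-step drift decomposition bound: In the proof of the expected progress bound, for a search point with i one-bits and n−i zero-bits under mutation probability p, the sum over k ≥ 1 and j ≥ 0 of k·C(i,k+j)·C(n−i,j)·p^{k+2j}·(1−p)^{n−k−2j} is at most [Σ_{k=1}^{i} k·C(i,k)·p^k·(1−p)^{n−k}] · [Σ_{j=0}^{n−i} i^j·C(n−i,j)·(p/(1−p))^{2j}], which equals (1−p)^{n−i}·i·p·(1 + i·(p/(1−p))²)^{n−i}. -/
open scoped BigOperators

lemma choose_add_le_mul_pow (i k j : ℕ) : i.choose (k + j) ≤ i.choose k * i ^ j := by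
  induction j with
  | zero => simp
  | succ j ih =>
      have h := Nat.choose_succ_right_eq i (k + j)
      have h1 : i.choose (k + (j+1)) * (k + j + 1) ≤ (i.choose k * i ^ j) * i := by
        calc i.choose (k + (j+1)) * (k + j + 1) = i.choose (k + j) * (i - (k+j)) := by
              rw [show k + (j+1) = (k+j)+1 from rfl, h]
          _ ≤ (i.choose k * i ^ j) * i :=
              Nat.mul_le_mul ih (Nat.sub_le _ _)
      have h2 : i.choose (k + (j+1)) ≤ i.choose (k + (j+1)) * (k + j + 1) :=
        Nat.le_mul_of_pos_right _ (Nat.succ_pos _)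
      calc i.choose (k + (j+1)) ≤ (i.choose k * i ^ j) * i := le_trans h2 h1
        _ = i.choose k * i ^ (j+1) := by ring

/-- Single-step drift decomposition bound: the double sum over `k ≥ 1`, `j ≥ 0` of
`k·C(i,k+j)·C(n−i,j)·p^{k+2j}·(1−p)^{n−k−2j}` is at most the product
`S₁ · S₂`, which evaluates to `(1−p)^{n−i}·i·p·(1 + i·(p/(1−p))²)^{n−i}`. -/
theorem single_step_drift_decomposition
    (n i : ℕ) (hi1 : 1 ≤ i) (hin : i ≤ n) (p : ℝ) (hp : 0 < p) (hp1 : p < 1) :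
    (∑ k ∈ Finset.Icc 1 i, ∑ j ∈ Finset.range (n + 1),
        (k : ℝ) * (i.choose (k + j)) * ((n - i).choose j) *
          p ^ (k + 2 * j) * (1 - p) ^ (n - k - 2 * j)) ≤
      (∑ k ∈ Finset.Icc 1 i, (k : ℝ) * (i.choose k) * p ^ k * (1 - p) ^ (n - k)) *
        (∑ j ∈ Finset.range (n - i + 1),
          (i : ℝ) ^ j * ((n - i).choose j) * (p / (1 - p)) ^ (2 * j)) ∧
    (∑ k ∈ Finset.Icc 1 i, (k : ℝ) * (i.choose k) * p ^ k * (1 - p) ^ (n - k)) *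
        (∑ j ∈ Finset.range (n - i + 1),
          (i : ℝ) ^ j * ((n - i).choose j) * (p / (1 - p)) ^ (2 * j)) =
      (1 - p) ^ (n - i) * i * p * (1 + (i : ℝ) * (p / (1 - p)) ^ 2) ^ (n - i) := by
  have hq : (0:ℝ) < 1 - p := by linarith
  constructor
  · -- inequality
    rw [Finset.sum_mul_sum]
    apply Finset.sum_le_sum
    intro k hk
    have hk1 : 1 ≤ k := (Finset.mem_Icc.mp hk).1
    have hki : k ≤ i := (Finset.mem_Icc.mp hk).2
    -- LHS inner sum over range (n+1); terms with j > n-i vanish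
    have hsub : Finset.range (n - i + 1) ⊆ Finset.range (n + 1) := by
      apply Finset.range_subset_range.mpr; omega
    rw [← Finset.sum_subset hsub (by
      intro j hj hj2
      have : n - i < j := by
        simp only [Finset.mem_range] at hj hj2; omega
      have : (n - i).choose j = 0 := Nat.choose_eq_zero_of_lt this
      simp [this])]
    apply Finset.sum_le_sum
    intro j hj
    have hjn : j ≤ n - i := by simp only [Finset.mem_range] at hj; omega
    by_cases hkj : k + j ≤ i
    · have hkn : k + 2 * j ≤ n := by omega
      have hrw : (1 - p) ^ (n - k) = (1 - p) ^ (n - k - 2 * j) * (1 - p) ^ (2 * j) := by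
        rw [← pow_add]; congr 1; omega
      have hchoose : (i.choose (k + j) : ℝ) ≤ (i.choose k : ℝ) * (i:ℝ) ^ j := by
        have := choose_add_le_mul_pow i k j
        exact_mod_cast this
      have hdiv : (p / (1 - p)) ^ (2 * j) = p ^ (2*j) / (1 - p) ^ (2*j) := div_pow _ _ _
      rw [hrw, hdiv]
      have hne : (1 - p) ^ (2*j) ≠ 0 := by positivity
      rw [show ((k : ℝ) * (i.choose k) * p ^ k * ((1 - p) ^ (n - k - 2 * j) * (1 - p) ^ (2*j))) *
          ((i : ℝ) ^ j * ((n - i).choose j) * (p ^ (2*j) / (1 - p) ^ (2*j)))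
          = (k : ℝ) * ((i.choose k : ℝ) * (i:ℝ)^j) * ((n - i).choose j) *
            (p ^ k * p ^ (2*j)) * (1 - p) ^ (n - k - 2 * j) by
        field_simp]
      rw [← pow_add]
      gcongr
    · have : i.choose (k + j) = 0 := Nat.choose_eq_zero_of_lt (by omega)
      rw [this]
      have : (0:ℝ) ≤ ((k : ℝ) * (i.choose k) * p ^ k * (1 - p) ^ (n - k)) *
          ((i : ℝ) ^ j * ((n - i).choose j) * (p / (1 - p)) ^ (2 * j)) := by positivity
      simpa using this
  · -- equality
    have hS1 : (∑ k ∈ Finset.Icc 1 i, (k : ℝ) * (i.choose k) * p ^ k * (1 - p) ^ (n - k))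
        = (1 - p) ^ (n - i) * i * p := by
      rw [← Finset.Ico_add_one_right_eq_Icc, Finset.sum_Ico_eq_sum_range]
      have : ∀ m ∈ Finset.range (i + 1 - 1),
          ((1 + m : ℕ) : ℝ) * (i.choose (1 + m)) * p ^ (1 + m) * (1 - p) ^ (n - (1 + m))
          = (1 - p) ^ (n - i) * i * p * ((i-1).choose m * p ^ m * (1-p) ^ (i - 1 - m)) := by
        intro m hm
        have hm' : m ≤ i - 1 := by simp only [Finset.mem_range] at hm; omega
        have hch : ((1 + m : ℕ) : ℝ) * (i.choose (1 + m)) = (i : ℝ) * ((i-1).choose m) := by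
          have h := Nat.add_one_mul_choose_eq (i - 1) m
          have hi' : i - 1 + 1 = i := by omega
          have h' : i * (i - 1).choose m = i.choose (m + 1) * (m + 1) := by
            simpa [Nat.succ_eq_add_one, hi'] using h
          have h'' : (m + 1) * i.choose (m + 1) = i * (i - 1).choose m := by
            rw [h', Nat.mul_comm]
          rw [add_comm 1 m]
          exact_mod_cast h''
        have hpow : (1 - p) ^ (n - (1 + m)) = (1 - p) ^ (n - i) * (1-p) ^ (i - 1 - m) := by
          rw [← pow_add]; congr 1; omega
        rw [hch, hpow]; ring
      rw [Finset.sum_congr rfl this, ← Finset.mul_sum]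
      have hib : (∑ m ∈ Finset.range (i + 1 - 1),
          ((i-1).choose m : ℝ) * p ^ m * (1-p) ^ (i - 1 - m)) = 1 := by
        have h := add_pow p (1 - p) (i - 1)
        have h1 : ((p + (1-p)) : ℝ) ^ (i-1) = 1 := by norm_num
        rw [h1] at h
        rw [show i + 1 - 1 = (i - 1) + 1 by omega]
        exact Eq.trans (Finset.sum_congr rfl fun m hm => by ring) h.symm
      rw [hib, mul_one]
    have hS2 : (∑ j ∈ Finset.range (n - i + 1),
          (i : ℝ) ^ j * ((n - i).choose j) * (p / (1 - p)) ^ (2 * j))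
        = (1 + (i : ℝ) * (p / (1 - p)) ^ 2) ^ (n - i) := by
      have h := add_pow ((i:ℝ) * (p / (1 - p)) ^ 2) 1 (n - i)
      rw [add_comm ((i:ℝ) * (p / (1 - p)) ^ 2) 1] at h
      rw [h]
      apply Finset.sum_congr rfl
      intro j hj
      rw [mul_pow, one_pow, ← pow_mul, mul_one]
      ring_nf
    rw [hS1, hS2]
end

section
/- Superpolynomial lower bound for large mutation probability: For any linear function with a unique optimum, the optimization time of any mutation-based EA with polynomial population size μ and mutation probability p = Ω(n^{ε−1}) for a constant ε > 0 is at least 2^{Ω(n^ε)} with probability 1 − 2^{−Ω(n^ε)}. -/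
open MeasureTheory
open scoped ENNReal BigOperators

/-- First point in time at which the process `x` hits the point `z`, as a value
in `ℝ≥0∞` (it is `⊤` if `z` is never reached). -/
noncomputable def hitT {n : ℕ} {Ω : Type*} (x : ℕ → Ω → (Fin n → Bool))
    (z : Fin n → Bool) (ω : Ω) : ℝ≥0∞ :=
  ⨅ (t : ℕ) (_ : x t ω = z), (t : ℝ≥0∞)

/-- `x` is the trajectory of a mutation-based EA with population size `μpop`,
mutation probability `p`, and (history-dependent, randomized) parent-selection
distribution `sel`: the first `μpop` points are independent and uniform, and
given the history, the next point is obtained by bit-flip mutation (with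
probability `p` per bit) of a parent chosen among the history according to
`sel`. -/
def IsMutationBasedEA {n : ℕ} {Ω : Type*} [MeasurableSpace Ω] (μ : Measure Ω)
    (p : ℝ) (μpop : ℕ) (sel : ℕ → (ℕ → (Fin n → Bool)) → ℕ → ℝ)
    (x : ℕ → Ω → (Fin n → Bool)) : Prop :=
  (∀ h : ℕ → (Fin n → Bool),
      (μ {ω | ∀ i < μpop, x i ω = h i}).toReal = ((1 : ℝ) / 2) ^ (n * μpop)) ∧
  (∀ t h, (∀ i, 0 ≤ sel t h i) ∧ ∑ i ∈ Finset.range (t + 1), sel t h i = 1) ∧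
  (∀ t, μpop ≤ t + 1 → ∀ (h : ℕ → (Fin n → Bool)) (y : Fin n → Bool),
      (μ {ω | (∀ i ≤ t, x i ω = h i) ∧ x (t + 1) ω = y}).toReal =
        (μ {ω | ∀ i ≤ t, x i ω = h i}).toReal *
          ∑ i ∈ Finset.range (t + 1), sel t h i * mutP p (h i) y)

lemma hamDist_le {n : ℕ} (x y : Fin n → Bool) : hamDist x y ≤ n := by
  classical
  refine le_trans (Finset.card_filter_le _ _) (by simp)

lemma mutP_nonneg {n : ℕ} {p : ℝ} (hp0 : 0 ≤ p) (hp2 : p ≤ 1/2)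
    (x y : Fin n → Bool) : 0 ≤ mutP p x y :=
  mul_nonneg (pow_nonneg hp0 _) (pow_nonneg (by linarith) _)

lemma mutP_le {n : ℕ} {p : ℝ} (hp0 : 0 ≤ p) (hp2 : p ≤ 1/2)
    (x y : Fin n → Bool) : mutP p x y ≤ (1 - p) ^ n := by
  have h1 : p ≤ 1 - p := by linarith
  have hd := hamDist_le x y
  calc p ^ hamDist x y * (1 - p) ^ (n - hamDist x y)
      ≤ (1 - p) ^ hamDist x y * (1 - p) ^ (n - hamDist x y) :=
        mul_le_mul_of_nonneg_right (pow_le_pow_left₀ hp0 h1 _)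
          (pow_nonneg (by linarith) _)
    _ = (1 - p) ^ n := by rw [← pow_add, Nat.add_sub_cancel' hd]

lemma sum_mutP {n : ℕ} (p : ℝ) (x : Fin n → Bool) :
    ∑ y : Fin n → Bool, mutP p x y = 1 := by
  classical
  have key := Finset.prod_add (fun _ : Fin n => p) (fun _ : Fin n => 1 - p)
    (Finset.univ : Finset (Fin n))
  have hL : ∏ _i ∈ (Finset.univ : Finset (Fin n)), (p + (1 - p)) = 1 := by
    simp
  rw [hL] at key
  have key2 : ∑ t : Finset (Fin n), p ^ t.card * (1 - p) ^ (n - t.card) = 1 := by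
    rw [← Finset.powerset_univ]
    calc ∑ t ∈ (Finset.univ : Finset (Fin n)).powerset,
          p ^ t.card * (1 - p) ^ (n - t.card)
        = ∑ t ∈ (Finset.univ : Finset (Fin n)).powerset,
          (∏ _i ∈ t, p) * ∏ _i ∈ Finset.univ \ t, (1 - p) := by
          refine Finset.sum_congr rfl fun t ht => ?_
          rw [Finset.prod_const, Finset.prod_const,
            Finset.card_sdiff_of_subset (Finset.subset_univ t), Finset.card_univ, Fintype.card_fin]
      _ = 1 := key.symm
  rw [← key2]
  refine Fintype.sum_bijective (fun y : Fin n → Bool =>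
    (Finset.univ.filter fun i => x i ≠ y i)) ?_ _ _ (fun y => rfl)
  rw [Function.bijective_iff_has_inverse]
  refine ⟨fun t => fun i => if i ∈ t then !(x i) else x i, ?_, ?_⟩
  · intro y
    funext i
    by_cases h : x i = y i
    · simp [h]
    · have : i ∈ Finset.univ.filter fun j => x j ≠ y j := by simp [h]
      simp only [Finset.mem_filter, Finset.mem_univ, true_and] at this
      simp only [Finset.mem_filter, Finset.mem_univ, true_and, if_pos h]
      revert h
      cases x i <;> cases y i <;> simp
  · intro t
    ext i
    by_cases h : i ∈ t
    · simp [h]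
    · simp [h]
def extF {n m : ℕ} (h : Fin m → (Fin n → Bool)) : ℕ → (Fin n → Bool) :=
  fun i => if hi : i < m then h ⟨i, hi⟩ else fun _ => false

def snoc' {V : Type*} {m : ℕ} (g : Fin m → V) (y : V) : Fin (m + 1) → V :=
  fun j => if hj : (j : ℕ) < m then g ⟨j, hj⟩ else y

lemma extF_snoc'_of_lt {n m : ℕ} (g : Fin m → (Fin n → Bool)) (y : Fin n → Bool)
    {i : ℕ} (hi : i < m) : extF (snoc' g y) i = extF g i := by
  simp [extF, snoc', hi, Nat.lt_succ_of_lt hi]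

lemma extF_snoc'_last {n m : ℕ} (g : Fin m → (Fin n → Bool)) (y : Fin n → Bool) :
    extF (snoc' g y) m = y := by
  simp [extF, snoc']

def snocEquiv (V : Type*) (m : ℕ) : (Fin (m + 1) → V) ≃ (Fin m → V) × V where
  toFun h := (fun j => h ⟨j, Nat.lt_succ_of_lt j.2⟩, h ⟨m, Nat.lt_succ_self m⟩)
  invFun gy := snoc' gy.1 gy.2
  left_inv h := by
    funext j
    rcases j with ⟨j, hj⟩
    by_cases hjm : j < m
    · simp [snoc', hjm]
    · have : j = m := by omega
      subst this
      simp [snoc']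
  right_inv gy := by
    rcases gy with ⟨g, y⟩
    refine Prod.ext ?_ ?_
    · funext j
      simp [snoc', j.2]
    · simp [snoc']

def histSet {n : ℕ} {Ω : Type*} (x : ℕ → Ω → (Fin n → Bool)) (t : ℕ)
    (h : Fin (t + 1) → (Fin n → Bool)) : Set Ω :=
  {ω | ∀ i ≤ t, x i ω = extF h i}

lemma mass_lemma {n : ℕ} {Ω : Type*} [MeasurableSpace Ω] {μ : Measure Ω}
    [IsProbabilityMeasure μ] {p : ℝ} {μpop : ℕ}
    {sel : ℕ → (ℕ → (Fin n → Bool)) → ℕ → ℝ} {x : ℕ → Ω → (Fin n → Bool)}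
    (hEA : IsMutationBasedEA μ p μpop sel x) (hμ1 : 1 ≤ μpop) :
    ∀ t, μpop - 1 ≤ t →
      ∑ h : Fin (t + 1) → (Fin n → Bool), (μ (histSet x t h)).toReal = 1 := by
  obtain ⟨k, rfl⟩ : ∃ k, μpop = k + 1 := ⟨μpop - 1, by omega⟩
  intro t ht
  simp only [Nat.add_sub_cancel] at ht
  induction t, ht using Nat.le_induction with
  | base =>
    have hset : ∀ h : Fin (k + 1) → (Fin n → Bool),
        histSet x k h = {ω | ∀ i < k + 1, x i ω = extF h i} := by
      intro h
      ext ω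
      constructor
      · intro hω i hi; exact hω i (by omega)
      · intro hω i hi; exact hω i (by omega)
    have hval : ∀ h : Fin (k + 1) → (Fin n → Bool),
        (μ (histSet x k h)).toReal = ((1 : ℝ) / 2) ^ (n * (k + 1)) := by
      intro h
      rw [hset h]
      exact hEA.1 (extF h)
    rw [Finset.sum_congr rfl fun h _ => hval h]
    rw [Finset.sum_const, Finset.card_univ, nsmul_eq_mul]
    rw [Fintype.card_fun, Fintype.card_fun, Fintype.card_fin, Fintype.card_fin,
      Fintype.card_bool]
    push_cast
    rw [← pow_mul, ← mul_pow]
    norm_num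
  | succ t ht ih =>
    -- reindex the sum over histories of length t+2
    have hre : ∑ h : Fin (t + 1 + 1) → (Fin n → Bool), (μ (histSet x (t + 1) h)).toReal
        = ∑ gy : (Fin (t + 1) → (Fin n → Bool)) × (Fin n → Bool),
            (μ (histSet x (t + 1) (snoc' gy.1 gy.2))).toReal := by
      refine Fintype.sum_bijective (snocEquiv (Fin n → Bool) (t + 1)).toFun
        (snocEquiv (Fin n → Bool) (t + 1)).bijective _ _ ?_
      intro h
      congr 1
      have : snoc' ((snocEquiv (Fin n → Bool) (t + 1)).toFun h).1
          ((snocEquiv (Fin n → Bool) (t + 1)).toFun h).2 = h :=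
        (snocEquiv (Fin n → Bool) (t + 1)).left_inv h
      rw [this]
    rw [hre, Fintype.sum_prod_type]
    have hstep : ∀ (g : Fin (t + 1) → (Fin n → Bool)) (y : Fin n → Bool),
        (μ (histSet x (t + 1) (snoc' g y))).toReal
          = (μ (histSet x t g)).toReal *
            ∑ i ∈ Finset.range (t + 1), sel t (extF g) i * mutP p (extF g i) y := by
      intro g y
      have hs : histSet x (t + 1) (snoc' g y)
          = {ω | (∀ i ≤ t, x i ω = extF g i) ∧ x (t + 1) ω = y} := by
        ext ω
        constructor
        · intro hω
          constructor
          · intro i hi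
            have := hω i (by omega)
            rwa [extF_snoc'_of_lt g y (by omega : i < t + 1)] at this
          · have := hω (t + 1) le_rfl
            rwa [extF_snoc'_last] at this
        · rintro ⟨h1, h2⟩ i hi
          rcases Nat.lt_or_ge i (t + 1) with hi' | hi'
          · rw [extF_snoc'_of_lt g y hi']
            exact h1 i (by omega)
          · have : i = t + 1 := by omega
            subst this
            rwa [extF_snoc'_last]
      rw [hs]
      exact hEA.2.2 t (by omega) (extF g) y
    calc ∑ g : Fin (t + 1) → (Fin n → Bool), ∑ y : Fin n → Bool,
          (μ (histSet x (t + 1) (snoc' g y))).toReal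
        = ∑ g : Fin (t + 1) → (Fin n → Bool), (μ (histSet x t g)).toReal := by
          refine Finset.sum_congr rfl fun g _ => ?_
          rw [Finset.sum_congr rfl fun y _ => hstep g y]
          rw [← Finset.mul_sum]
          have : ∑ y : Fin n → Bool, ∑ i ∈ Finset.range (t + 1),
              sel t (extF g) i * mutP p (extF g i) y = 1 := by
            rw [Finset.sum_comm]
            have : ∀ i ∈ Finset.range (t + 1),
                ∑ y : Fin n → Bool, sel t (extF g) i * mutP p (extF g i) y
                  = sel t (extF g) i := by
              intro i _
              rw [← Finset.mul_sum, sum_mutP, mul_one]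
            rw [Finset.sum_congr rfl this]
            exact (hEA.2.1 t (extF g)).2
          rw [this, mul_one]
      _ = 1 := ih

lemma step_bound {n : ℕ} {Ω : Type*} [MeasurableSpace Ω] {μ : Measure Ω}
    [IsProbabilityMeasure μ] {p : ℝ} {μpop : ℕ}
    {sel : ℕ → (ℕ → (Fin n → Bool)) → ℕ → ℝ} {x : ℕ → Ω → (Fin n → Bool)}
    (hEA : IsMutationBasedEA μ p μpop sel x) (hμ1 : 1 ≤ μpop)
    (hp0 : 0 ≤ p) (hp2 : p ≤ 1 / 2) (t : ℕ) :
    μ {ω | x t ω = fun _ => false} ≤ ENNReal.ofReal ((1 - p) ^ n) := by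
  classical
  have h2 : (0:ℝ) ≤ 1 - p := by linarith
  rcases Nat.lt_or_ge t μpop with htμ | htμ
  · -- initial population
    have hsub : {ω | x t ω = fun _ => false} ⊆
        ⋃ h : Fin μpop → (Fin n → Bool),
          ({ω | ∀ i < μpop, x i ω = extF h i} ∩ {ω | x t ω = fun _ => false}) := by
      intro ω hω
      refine Set.mem_iUnion.2 ⟨fun i => x i.1 ω, ?_, hω⟩
      intro i hi
      simp [extF, hi]
    refine le_trans (measure_mono hsub) ?_
    refine le_trans (measure_iUnion_le _) ?_
    rw [tsum_fintype]
    have hbd : ∀ h : Fin μpop → (Fin n → Bool),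
        μ ({ω | ∀ i < μpop, x i ω = extF h i} ∩ {ω | x t ω = fun _ => false})
          ≤ if h ⟨t, htμ⟩ = (fun _ => false) then
              ENNReal.ofReal (((1:ℝ) / 2) ^ (n * μpop)) else 0 := by
      intro h
      by_cases hz : h ⟨t, htμ⟩ = (fun _ => false)
      · rw [if_pos hz]
        refine le_trans (measure_mono Set.inter_subset_left) ?_
        rw [← hEA.1 (extF h), ENNReal.ofReal_toReal (measure_ne_top μ _)]
      · rw [if_neg hz]
        have : {ω | ∀ i < μpop, x i ω = extF h i} ∩ {ω | x t ω = fun _ => false}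
            = ∅ := by
          ext ω
          simp only [Set.mem_inter_iff, Set.mem_setOf_eq, Set.mem_empty_iff_false,
            iff_false, not_and]
          intro hall hzero
          refine hz ?_
          have := hall t htμ
          rw [hzero] at this
          have hext : extF h t = h ⟨t, htμ⟩ := by simp [extF, htμ]
          rw [hext] at this
          exact this.symm
        rw [this, measure_empty]
    refine le_trans (Finset.sum_le_sum fun h _ => hbd h) ?_
    rw [← Finset.sum_filter]
    simp only [Finset.sum_const, nsmul_eq_mul]
    -- count histories with fixed t-coordinate
    have hcard : (Finset.univ.filter
        fun h : Fin μpop → (Fin n → Bool) => h ⟨t, htμ⟩ = (fun _ => false)).card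
          = ((2:ℕ) ^ n) ^ (μpop - 1) := by
      rw [← Fintype.card_subtype]
      have e : {h : Fin μpop → (Fin n → Bool) // h ⟨t, htμ⟩ = (fun _ => false)}
          ≃ ({j : Fin μpop // j ≠ ⟨t, htμ⟩} → (Fin n → Bool)) :=
        { toFun := fun h j => h.1 j.1
          invFun := fun g => ⟨fun j => if hj : j = ⟨t, htμ⟩ then (fun _ => false)
            else g ⟨j, hj⟩, by simp⟩
          left_inv := by
            rintro ⟨h, hh⟩
            refine Subtype.ext ?_
            funext j
            by_cases hj : j = ⟨t, htμ⟩
            · subst hj; simp [hh]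
            · simp [hj]
          right_inv := by
            intro g
            funext j
            simp [j.2] }
      rw [Fintype.card_congr e, Fintype.card_fun, Fintype.card_fun,
        Fintype.card_fin, Fintype.card_bool]
      congr 1
      have := Fintype.card_subtype_compl (fun j : Fin μpop => j = ⟨t, htμ⟩)
      simp only [Fintype.card_subtype_eq, Fintype.card_fin] at this
      convert this using 2
    rw [hcard]
    have hrr : (((((2:ℕ) ^ n) ^ (μpop - 1) : ℕ)) : ℝ≥0∞) * ENNReal.ofReal (((1:ℝ)/2) ^ (n * μpop))
        = ENNReal.ofReal ((((((2:ℕ) ^ n) ^ (μpop - 1) : ℕ)) : ℝ) * ((1:ℝ)/2) ^ (n * μpop)) := by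
      rw [ENNReal.ofReal_mul (by positivity), ENNReal.ofReal_natCast]
    rw [hrr]
    refine ENNReal.ofReal_le_ofReal ?_
    have hval : ((((((2:ℕ) ^ n) ^ (μpop - 1) : ℕ)) : ℝ)) * ((1:ℝ)/2) ^ (n * μpop)
        = ((1:ℝ)/2) ^ n := by
      obtain ⟨k, hk⟩ : ∃ k, μpop = k + 1 :=
        ⟨μpop - 1, (Nat.succ_pred_eq_of_pos hμ1).symm⟩
      subst hk
      simp only [Nat.add_sub_cancel, Nat.cast_pow, Nat.cast_ofNat]
      rw [Nat.mul_add, pow_add, ← pow_mul, ← mul_assoc,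
        Nat.mul_comm n k, ← mul_pow]
      norm_num
    rw [hval]
    refine pow_le_pow_left₀ (by norm_num) (by linarith) n
  · -- mutation step
    obtain ⟨s, rfl⟩ : ∃ s, t = s + 1 := ⟨t - 1, by omega⟩
    have hsub : {ω | x (s + 1) ω = fun _ => false} ⊆
        ⋃ g : Fin (s + 1) → (Fin n → Bool),
          {ω | (∀ i ≤ s, x i ω = extF g i) ∧ x (s + 1) ω = (fun _ => false)} := by
      intro ω hω
      refine Set.mem_iUnion.2 ⟨fun i => x i.1 ω, ?_, hω⟩
      intro i hi
      simp [extF, Nat.lt_succ_of_le hi]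
    refine le_trans (measure_mono hsub) ?_
    refine le_trans (measure_iUnion_le _) ?_
    rw [tsum_fintype]
    have hval : ∀ g : Fin (s + 1) → (Fin n → Bool),
        μ {ω | (∀ i ≤ s, x i ω = extF g i) ∧ x (s + 1) ω = (fun _ => false)}
          = ENNReal.ofReal ((μ {ω | ∀ i ≤ s, x i ω = extF g i}).toReal *
              ∑ i ∈ Finset.range (s + 1),
                sel s (extF g) i * mutP p (extF g i) (fun _ => false)) := by
      intro g
      conv_lhs => rw [← ENNReal.ofReal_toReal (measure_ne_top μ
        {ω | (∀ i ≤ s, x i ω = extF g i) ∧ x (s + 1) ω = (fun _ => false)})]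
      rw [hEA.2.2 s htμ (extF g) (fun _ => false)]
    rw [Finset.sum_congr rfl fun g _ => hval g]
    rw [← ENNReal.ofReal_sum_of_nonneg (fun g _ => ?_)]
    swap
    · refine mul_nonneg ENNReal.toReal_nonneg ?_
      refine Finset.sum_nonneg fun i _ => mul_nonneg ((hEA.2.1 s (extF g)).1 i)
        (mutP_nonneg hp0 hp2 _ _)
    refine ENNReal.ofReal_le_ofReal ?_
    have hq : ∀ g : Fin (s + 1) → (Fin n → Bool),
        ∑ i ∈ Finset.range (s + 1),
          sel s (extF g) i * mutP p (extF g i) (fun _ => false) ≤ (1 - p) ^ n := by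
      intro g
      calc ∑ i ∈ Finset.range (s + 1),
            sel s (extF g) i * mutP p (extF g i) (fun _ => false)
          ≤ ∑ i ∈ Finset.range (s + 1), sel s (extF g) i * (1 - p) ^ n := by
            refine Finset.sum_le_sum fun i _ => ?_
            exact mul_le_mul_of_nonneg_left (mutP_le hp0 hp2 _ _)
              ((hEA.2.1 s (extF g)).1 i)
        _ = (1 - p) ^ n := by
            rw [← Finset.sum_mul, (hEA.2.1 s (extF g)).2, one_mul]
    have hmass : ∑ g : Fin (s + 1) → (Fin n → Bool),
        (μ {ω | ∀ i ≤ s, x i ω = extF g i}).toReal = 1 :=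
      mass_lemma hEA hμ1 s (by omega)
    calc ∑ g : Fin (s + 1) → (Fin n → Bool),
          (μ {ω | ∀ i ≤ s, x i ω = extF g i}).toReal * ∑ i ∈ Finset.range (s + 1),
            sel s (extF g) i * mutP p (extF g i) (fun _ => false)
        ≤ ∑ g : Fin (s + 1) → (Fin n → Bool),
            (μ {ω | ∀ i ≤ s, x i ω = extF g i}).toReal * (1 - p) ^ n := by
          refine Finset.sum_le_sum fun g _ => ?_
          exact mul_le_mul_of_nonneg_left (hq g) ENNReal.toReal_nonneg
      _ = (1 - p) ^ n := by
          rw [← Finset.sum_mul, hmass, one_mul]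

/-- On any linear function (with positive weights, so that the all-zeros string
is the unique optimum), every mutation-based EA with polynomial population size
and mutation probability `p = Ω(n^{ε−1})` needs time at least `2^{Ω(n^ε)}` with
probability `1 − 2^{−Ω(n^ε)}`. -/
theorem lower_bound_large_mutation_probability :
    ∀ ε : ℝ, 0 < ε → ∀ c c' : ℝ, 0 < c → 0 < c' →
    ∃ γ : ℝ, 0 < γ ∧ ∃ N : ℕ, ∀ n : ℕ, N ≤ n →
    ∀ p : ℝ, c * (n : ℝ) ^ (ε - 1) ≤ p → p ≤ 1 / 2 →
    ∀ μpop : ℕ, 1 ≤ μpop → (μpop : ℝ) ≤ (n : ℝ) ^ c' →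
    ∀ w : Fin n → ℝ, (∀ i, 0 < w i) →
    ∀ (Ω : Type) (_ : MeasurableSpace Ω) (μ : Measure Ω), IsProbabilityMeasure μ →
    ∀ (sel : ℕ → (ℕ → (Fin n → Bool)) → ℕ → ℝ) (x : ℕ → Ω → (Fin n → Bool)),
    IsMutationBasedEA μ p μpop sel x →
    μ {ω | hitT x (fun _ => false) ω < ENNReal.ofReal ((2 : ℝ) ^ (γ * (n : ℝ) ^ ε))} ≤
      ENNReal.ofReal ((2 : ℝ) ^ (-(γ * (n : ℝ) ^ ε))) := by
  intro ε hε c c' hc hc'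
  refine ⟨c / 8, by positivity, max 2 (⌈(2 / c) ^ (1 / ε)⌉₊ + 1), ?_⟩
  intro n hn p hpc hp2 μpop hμ1 _ w _ Ω _inst μ hprob sel x hEA
  haveI := hprob
  have hn2 : 2 ≤ n := le_trans (le_max_left _ _) hn
  have hnpos : (0:ℝ) < (n:ℝ) := by
    have : 0 < n := by omega
    exact_mod_cast this
  have hp0 : 0 ≤ p :=
    le_trans (mul_pos hc (Real.rpow_pos_of_pos hnpos (ε - 1))).le hpc
  have h2 : (0:ℝ) ≤ 1 - p := by linarith
  set m := (n:ℝ) ^ ε with hm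
  have hm0 : 0 ≤ m := Real.rpow_nonneg hnpos.le ε
  -- n^ε ≥ 2/c
  have hmlb : (2:ℝ) / c ≤ m := by
    have h1 : ((2 / c) ^ (1 / ε) : ℝ) ≤ (n:ℝ) := by
      calc ((2 / c) ^ (1 / ε) : ℝ) ≤ (⌈(2 / c) ^ (1 / ε)⌉₊ : ℝ) := Nat.le_ceil _
        _ ≤ (n:ℝ) := by
            have : ⌈(2 / c) ^ (1 / ε)⌉₊ ≤ n := by
              have := le_trans (le_max_right 2 (⌈(2 / c) ^ (1 / ε)⌉₊ + 1)) hn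
              omega
            exact_mod_cast this
    have h2c : (0:ℝ) ≤ 2 / c := by positivity
    have h3 : (((2 / c) ^ (1 / ε) : ℝ)) ^ ε ≤ (n:ℝ) ^ ε :=
      Real.rpow_le_rpow (Real.rpow_nonneg h2c _) h1 hε.le
    rwa [← Real.rpow_mul h2c, one_div_mul_cancel hε.ne', Real.rpow_one] at h3
  -- p * n ≥ c * m
  have hpn : c * m ≤ p * (n:ℝ) := by
    have h4 : c * (n:ℝ) ^ (ε - 1) * (n:ℝ) ≤ p * (n:ℝ) :=
      mul_le_mul_of_nonneg_right hpc hnpos.le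
    have h5 : c * (n:ℝ) ^ (ε - 1) * (n:ℝ) = c * m := by
      rw [hm, mul_assoc]
      congr 1
      nth_rewrite 2 [← Real.rpow_one (n:ℝ)]
      rw [← Real.rpow_add hnpos]
      congr 1
      ring
    rwa [h5] at h4
  have hexp : (1 - p) ^ n ≤ Real.exp (-(c * m)) := by
    have e1 : 1 - p ≤ Real.exp (-p) := by
      have := Real.add_one_le_exp (-p); linarith
    have e2 : (1 - p) ^ n ≤ Real.exp (-p) ^ n := pow_le_pow_left₀ h2 e1 n
    have e3 : Real.exp (-p) ^ n = Real.exp (-(p * (n:ℝ))) := by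
      rw [← Real.exp_nat_mul]; ring_nf
    rw [e3] at e2
    exact le_trans e2 (Real.exp_le_exp.2 (by linarith))
  set R := (2:ℝ) ^ (c / 8 * m) with hR
  set T₀ := ⌈R⌉₊ with hT₀
  have hR1 : (1:ℝ) ≤ R := by
    rw [hR]
    calc (1:ℝ) = (2:ℝ) ^ (0:ℝ) := (Real.rpow_zero 2).symm
      _ ≤ (2:ℝ) ^ (c / 8 * m) := Real.rpow_le_rpow_of_exponent_le (by norm_num)
          (by positivity)
  -- event inclusion
  have hsubE : {ω | hitT x (fun _ => false) ω < ENNReal.ofReal R} ⊆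
      ⋃ t ∈ Finset.range T₀, {ω | x t ω = fun _ => false} := by
    intro ω hω
    simp only [Set.mem_setOf_eq, hitT] at hω
    rw [iInf_lt_iff] at hω
    obtain ⟨t, ht⟩ := hω
    rw [iInf_lt_iff] at ht
    obtain ⟨hx0, htlt⟩ := ht
    have htR : (t:ℝ) < R := by
      rw [← ENNReal.ofReal_natCast t] at htlt
      exact (ENNReal.ofReal_lt_ofReal_iff_of_nonneg (Nat.cast_nonneg t)).1 htlt
    have htm : t ∈ Finset.range T₀ := Finset.mem_range.2 (Nat.lt_ceil.2 htR)
    exact Set.mem_biUnion htm hx0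
  refine le_trans (measure_mono hsubE) ?_
  refine le_trans (measure_biUnion_finset_le _ _) ?_
  have hbd : ∀ t ∈ Finset.range T₀,
      μ {ω | x t ω = fun _ => false} ≤ ENNReal.ofReal ((1 - p) ^ n) :=
    fun t _ => step_bound hEA hμ1 hp0 hp2 t
  refine le_trans (Finset.sum_le_sum hbd) ?_
  rw [Finset.sum_const, Finset.card_range, nsmul_eq_mul,
    ← ENNReal.ofReal_natCast T₀, ← ENNReal.ofReal_mul (Nat.cast_nonneg _)]
  refine ENNReal.ofReal_le_ofReal ?_
  -- final real inequality
  have hT : (T₀:ℝ) ≤ 2 * R := by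
    have := Nat.ceil_lt_add_one (le_trans zero_le_one hR1)
    rw [hT₀]
    linarith
  have h1 : (T₀:ℝ) * (1 - p) ^ n ≤ (2 * R) * Real.exp (-(c * m)) :=
    mul_le_mul hT hexp (pow_nonneg h2 n) (by linarith)
  refine le_trans h1 ?_
  have hcm : (2:ℝ) ≤ c * m := by
    have := mul_le_mul_of_nonneg_left hmlb hc.le
    calc (2:ℝ) = c * (2 / c) := by field_simp
      _ ≤ c * m := this
  have hlog1 : Real.log 2 ≤ 0.7 := by
    have := Real.log_two_lt_d9; linarith
  have hlog0 : (0:ℝ) ≤ Real.log 2 := Real.log_nonneg (by norm_num)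
  rw [hR, Real.rpow_def_of_pos (by norm_num : (0:ℝ) < 2),
    Real.rpow_def_of_pos (by norm_num : (0:ℝ) < 2)]
  nth_rewrite 1 [show (2:ℝ) = Real.exp (Real.log 2) from
    (Real.exp_log (by norm_num)).symm]
  rw [← Real.exp_add, ← Real.exp_add]
  refine Real.exp_le_exp.2 ?_
  have hint : Real.log 2 * (c * m) ≤ 0.7 * (c * m) :=
    mul_le_mul_of_nonneg_right hlog1 (by linarith)
  nlinarith [hint, hcm, hlog1, hlog0]
end
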